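/- Fix a graph Γ of genus g with n legs and k ∈ ℤ, and let A ∈ ℤⁿ satisfy Σ_i a_i = k(2g−2+n). Let Γ' be the graph with n + #V legs obtained from Γ by attaching one new leg at each vertex v ∈ V, and let A' ∈ ℤ^{n+#V} be A followed by the entries −k(2g(v)−2+n(v)) for v ∈ V, where n(v) is the number of half-edges of Γ at v. Then: (a) the sum of the entries of A' is 0 (equivalently, Σ_{v∈V} (2g(v)−2+n(v)) = 2g−2+n); (b) h¹(Γ') = h¹(Γ); (c) for every integer r ≥ 1, extending a weighting w ∈ W^Γ_{A,r} (for A with twist k) by assigning to the new leg at each vertex v the value (−k(2g(v)−2+n(v))) mod r gives a bijection W^Γ_{A,r} ≅ W^{Γ'}_{A',r}, where W^{Γ'}_{A',r} is the set of weightings on Γ' for A' mod r with twist 0; consequently S^Γ_{A,r}(Q) = S^{Γ'}_{A',r}(Q) for every Q ∈ ℤ[x_h : h ∈ H∖L] (the non-leg half-edges of Γ and Γ' coincide). -/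

import Mathlib

open scoped BigOperators

/-- A graph of genus `g` with `n` legs: vertices, half-edges, an involution,
a root map, a list of `n` legs which are exactly the fixed points of the
involution, and a genus function. -/
structure LegGraph (n : ℕ) where
  V : Type
  H : Type
  [fintypeV : Fintype V]
  [fintypeH : Fintype H]
  [decEqV : DecidableEq V]
  [decEqH : DecidableEq H]
  ι : H → H
  ι_invol : ∀ h, ι (ι h) = h
  root : H → V
  leg : Fin n → H
  leg_inj : Function.Injective leg
  leg_iff : ∀ h, ι h = h ↔ ∃ i, leg i = h
  genus : V → ℕ

attribute [instance] LegGraph.fintypeV LegGraph.fintypeH LegGraph.decEqV LegGraph.decEqH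

namespace LegGraph

variable {n : ℕ}

/-- Connectedness: the equivalence relation on `V` generated by relating `r h` and
`r (i h)` has exactly one class. -/
def Connected (G : LegGraph n) : Prop :=
  ∀ v w : G.V, Relation.EqvGen (fun a b => ∃ h : G.H, G.root h = a ∧ G.root (G.ι h) = b) v w

/-- The number of edges: pairs `{h, ι h}` with `ι h ≠ h`. -/
def edgeCard (G : LegGraph n) : ℕ :=
  (Finset.univ.filter fun h : G.H => G.ι h ≠ h).card / 2

/-- The first Betti number `#E - #V + 1` (as an integer). -/
def h1 (G : LegGraph n) : ℤ :=
  (G.edgeCard : ℤ) - (Fintype.card G.V : ℤ) + 1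

/-- The number `n(v)` of half-edges rooted at a vertex `v`. -/
def deg (G : LegGraph n) (v : G.V) : ℕ :=
  (Finset.univ.filter fun h : G.H => G.root h = v).card

/-- The (total) genus of the graph: `∑ g(v) + h¹(Γ)`. -/
def genusTot (G : LegGraph n) : ℤ :=
  (∑ v : G.V, (G.genus v : ℤ)) + G.h1

/-- A weighting for `A` mod `r` (with twist `k`). -/
def IsWeighting (G : LegGraph n) (k : ℤ) (A : Fin n → ℤ) (r : ℕ) (w : G.H → Fin r) : Prop :=
  (∀ i : Fin n, ((w (G.leg i) : ℕ) : ℤ) % (r : ℤ) = A i % (r : ℤ)) ∧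
  (∀ h : G.H, G.ι h ≠ h → (((w h : ℕ) : ℤ) + ((w (G.ι h) : ℕ) : ℤ)) % (r : ℤ) = 0) ∧
  (∀ v : G.V,
    (∑ h ∈ Finset.univ.filter (fun h : G.H => G.root h = v), ((w h : ℕ) : ℤ)) % (r : ℤ)
      = (k * (2 * (G.genus v : ℤ) - 2 + (G.deg v : ℤ))) % (r : ℤ))

open scoped Classical in
/-- The finite set `W^Γ_{A,r}` of weightings for `A` mod `r` (with twist `k`). -/
noncomputable def weightings (G : LegGraph n) (k : ℤ) (A : Fin n → ℤ) (r : ℕ) :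
    Finset (G.H → Fin r) :=
  Finset.univ.filter fun w => G.IsWeighting k A r w

/-- The non-leg half-edges, indexing the variables of the polynomials `Q`. -/
def NonLeg (G : LegGraph n) : Type := {h : G.H // G.ι h ≠ h}

/-- The sum `S^Γ_{A,r}(Q) = r^{-h¹(Γ)} ∑_{w ∈ W^Γ_{A,r}} Q((w h)_h)`. -/
noncomputable def S (G : LegGraph n) (k : ℤ) (A : Fin n → ℤ)
    (Q : MvPolynomial G.NonLeg ℤ) (r : ℕ) : ℚ :=
  (r : ℚ) ^ (-G.h1) * ∑ w ∈ G.weightings k A r,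
    ((MvPolynomial.eval (fun h : G.NonLeg => ((w h.1 : ℕ) : ℤ)) Q : ℤ) : ℚ)

end LegGraph

/-- A function `ℕ → ℚ` is eventually polynomial. -/
def EvPoly (f : ℕ → ℚ) : Prop :=
  ∃ p : Polynomial ℚ, ∃ N : ℕ, ∀ r : ℕ, N ≤ r → f r = p.eval (r : ℚ)

open scoped Classical in
/-- The constant term of the polynomial expression of an eventually polynomial function
(junk value `0` otherwise).  When `EvPoly f` holds this is well defined, i.e. independent
of the choice of polynomial. -/
noncomputable def constTerm (f : ℕ → ℚ) : ℚ :=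
  if h : EvPoly f then (Classical.choose h).eval 0 else 0

/-- `S^Γ_{A,0}(Q)`: the constant term of the eventually polynomial function
`r ↦ S^Γ_{A,r}(Q)`. -/
noncomputable def LegGraph.S0 {n : ℕ} (G : LegGraph n) (k : ℤ) (A : Fin n → ℤ)
    (Q : MvPolynomial G.NonLeg ℤ) : ℚ :=
  constTerm fun r => G.S k A Q r

/-- `m mod r` as an element of `Fin r = {0, …, r-1}`, for an integer `m`. -/
def intFin (r : ℕ) (hr : 0 < r) (m : ℤ) : Fin r :=
  ⟨(m % (r : ℤ)).toNat, by
    have h0 : (0 : ℤ) < (r : ℤ) := by exact_mod_cast hr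
    have h1 : m % (r : ℤ) < (r : ℤ) := Int.emod_lt_of_pos m h0
    have h2 : 0 ≤ m % (r : ℤ) := Int.emod_nonneg m (by omega)
    omega⟩
namespace LegGraph

variable {n : ℕ}

theorem not_leg_of_not_fixed (G : LegGraph n) {h : G.H} (hh : G.ι h ≠ h) :
    ∀ i, G.leg i ≠ h :=
  fun i hi => hh ((G.leg_iff h).2 ⟨i, hi⟩)

/-- The graph `Γ_e` obtained by cutting the edge `e = {h₁, h₂}`: the involution now fixes
`h₁` and `h₂`, which become the two new legs `ℓ_{n+1} = h₁` and `ℓ_{n+2} = h₂`. -/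
def cut (G : LegGraph n) (h₁ h₂ : G.H) (he : G.ι h₁ = h₂) (hne : h₁ ≠ h₂) :
    LegGraph (n + 2) where
  V := G.V
  H := G.H
  ι h := if h = h₁ then h₁ else if h = h₂ then h₂ else G.ι h
  ι_invol := by
    have he' : G.ι h₂ = h₁ := by rw [← he, G.ι_invol]
    intro h
    rcases eq_or_ne h h₁ with rfl | e1
    · simp
    · rcases eq_or_ne h h₂ with rfl | e2
      · simp [Ne.symm hne]
      · have hι1 : G.ι h ≠ h₁ := by
          intro hh
          exact e2 (by rw [← G.ι_invol h, hh, he])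
        have hι2 : G.ι h ≠ h₂ := by
          intro hh
          exact e1 (by rw [← G.ι_invol h, hh, he'])
        simp [e1, e2, hι1, hι2, G.ι_invol]
  root := G.root
  leg := Fin.snoc (Fin.snoc G.leg h₁) h₂
  leg_inj := by
    have hb₁ : G.ι h₁ ≠ h₁ := by rw [he]; exact Ne.symm hne
    have he' : G.ι h₂ = h₁ := by rw [← he, G.ι_invol]
    have hb₂ : G.ι h₂ ≠ h₂ := by rw [he']; exact hne
    have hl₁ := G.not_leg_of_not_fixed hb₁
    have hl₂ := G.not_leg_of_not_fixed hb₂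
    intro i j hij
    induction i using Fin.lastCases with
    | last =>
      induction j using Fin.lastCases with
      | last => rfl
      | cast j =>
        rw [Fin.snoc_last, Fin.snoc_castSucc] at hij
        induction j using Fin.lastCases with
        | last => rw [Fin.snoc_last] at hij; exact absurd hij.symm hne
        | cast j => rw [Fin.snoc_castSucc] at hij; exact absurd hij.symm (hl₂ j)
    | cast i =>
      induction j using Fin.lastCases with
      | last =>
        rw [Fin.snoc_last, Fin.snoc_castSucc] at hij
        induction i using Fin.lastCases with
        | last => rw [Fin.snoc_last] at hij; exact absurd hij hne
        | cast i => rw [Fin.snoc_castSucc] at hij; exact absurd hij (hl₂ i)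
      | cast j =>
        rw [Fin.snoc_castSucc, Fin.snoc_castSucc] at hij
        induction i using Fin.lastCases with
        | last =>
          induction j using Fin.lastCases with
          | last => rfl
          | cast j =>
            rw [Fin.snoc_last, Fin.snoc_castSucc] at hij
            exact absurd hij.symm (hl₁ j)
        | cast i =>
          induction j using Fin.lastCases with
          | last =>
            rw [Fin.snoc_last, Fin.snoc_castSucc] at hij
            exact absurd hij (hl₁ i)
          | cast j =>
            rw [Fin.snoc_castSucc, Fin.snoc_castSucc] at hij
            rw [G.leg_inj hij]
  genus := G.genus
  leg_iff := by
    have hb₁ : G.ι h₁ ≠ h₁ := by rw [he]; exact Ne.symm hne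
    have he' : G.ι h₂ = h₁ := by rw [← he, G.ι_invol]
    intro h
    constructor
    · intro hfix
      rcases eq_or_ne h h₁ with rfl | e1
      · exact ⟨(Fin.last n).castSucc, by
          rw [Fin.snoc_castSucc, Fin.snoc_last]⟩
      · rcases eq_or_ne h h₂ with rfl | e2
        · exact ⟨Fin.last (n + 1), by rw [Fin.snoc_last]⟩
        · simp only [if_neg e1, if_neg e2] at hfix
          obtain ⟨i, hi⟩ := (G.leg_iff h).1 hfix
          exact ⟨i.castSucc.castSucc, by rw [Fin.snoc_castSucc, Fin.snoc_castSucc]; exact hi⟩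
    · rintro ⟨i, rfl⟩
      induction i using Fin.lastCases with
      | last =>
        rw [Fin.snoc_last]
        simp [Ne.symm hne]
      | cast i =>
        rw [Fin.snoc_castSucc]
        induction i using Fin.lastCases with
        | last => rw [Fin.snoc_last]; simp
        | cast i =>
          rw [Fin.snoc_castSucc]
          have h1 := G.not_leg_of_not_fixed hb₁ i
          have h2 := G.not_leg_of_not_fixed (show G.ι h₂ ≠ h₂ by rw [he']; exact hne) i
          show (if G.leg i = h₁ then h₁ else if G.leg i = h₂ then h₂ else G.ι (G.leg i))
              = G.leg i
          rw [if_neg h1, if_neg h2]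
          exact (G.leg_iff (G.leg i)).2 ⟨i, rfl⟩

end LegGraph
namespace LegGraph

variable {n : ℕ}

/-- The graph `Γ'` obtained from `Γ` by attaching one new leg at every vertex. -/
noncomputable def addLegs (G : LegGraph n) : LegGraph (n + Fintype.card G.V) where
  V := G.V
  H := G.H ⊕ G.V
  ι := Sum.map G.ι id
  ι_invol := by rintro (h | v) <;> simp [G.ι_invol]
  root := Sum.elim G.root id
  leg i :=
    if hi : (i : ℕ) < n then Sum.inl (G.leg ⟨(i : ℕ), hi⟩)
    else Sum.inr ((Fintype.equivFin G.V).symm ⟨(i : ℕ) - n, by have := i.isLt; omega⟩)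
  leg_inj := by
    intro i j hij
    beta_reduce at hij
    by_cases hi : (i : ℕ) < n <;> by_cases hj : (j : ℕ) < n
    · rw [dif_pos hi, dif_pos hj] at hij
      have h2 := G.leg_inj (Sum.inl_injective hij)
      have h3 : (i : ℕ) = (j : ℕ) := by simpa using congrArg Fin.val h2
      exact Fin.ext h3
    · rw [dif_pos hi, dif_neg hj] at hij
      exact absurd hij (by simp)
    · rw [dif_neg hi, dif_pos hj] at hij
      exact absurd hij (by simp)
    · rw [dif_neg hi, dif_neg hj] at hij
      have h2 := (Fintype.equivFin G.V).symm.injective (Sum.inr_injective hij)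
      have h3 : (i : ℕ) - n = (j : ℕ) - n := by simpa using congrArg Fin.val h2
      exact Fin.ext (by omega)
  leg_iff := by
    rintro (h | v)
    · constructor
      · intro hfix
        have : G.ι h = h := Sum.inl_injective hfix
        obtain ⟨i, hi⟩ := (G.leg_iff h).1 this
        refine ⟨⟨(i : ℕ), by have := i.isLt; omega⟩, ?_⟩
        beta_reduce
        rw [dif_pos i.isLt]
        exact congrArg Sum.inl (by rw [show (⟨(i : ℕ), i.isLt⟩ : Fin n) = i from rfl, hi])
      · rintro ⟨i, hi⟩
        beta_reduce at hi
        by_cases h' : (i : ℕ) < n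
        · rw [dif_pos h'] at hi
          have := Sum.inl_injective hi
          have hfix : G.ι h = h := (G.leg_iff h).2 ⟨⟨(i : ℕ), h'⟩, this⟩
          exact congrArg Sum.inl hfix
        · rw [dif_neg h'] at hi
          exact absurd hi (by simp)
    · constructor
      · intro _
        refine ⟨⟨n + (Fintype.equivFin G.V v : ℕ), by
            have := (Fintype.equivFin G.V v).isLt; omega⟩, ?_⟩
        beta_reduce
        rw [dif_neg (by simp only [Fin.val_mk]; omega)]
        refine congrArg Sum.inr ?_
        rw [Equiv.symm_apply_eq]
        exact Fin.ext (by simp)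
      · intro _
        rfl
  genus := G.genus

end LegGraph
/-- The data exhibiting an edge `e = {h₁, h₂}` of `Γ` as a separating edge splitting `Γ`
into two connected graphs `Γ₁` (containing the root of `h₁`, with one new leg `ℓ'` at the
root of `h₁`, placed last) and `Γ₂` (containing the root of `h₂`, with one new leg `ℓ''`
at the root of `h₂`, placed last). -/
structure EdgeSplit {n n₁ n₂ : ℕ} (G : LegGraph n) (G₁ : LegGraph (n₁ + 1))
    (G₂ : LegGraph (n₂ + 1)) (h₁ h₂ : G.H) where
  he : G.ι h₁ = h₂
  hne : h₁ ≠ h₂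
  conn : G.Connected
  conn₁ : G₁.Connected
  conn₂ : G₂.Connected
  eV : G.V ≃ G₁.V ⊕ G₂.V
  eH : G.H ≃ G₁.H ⊕ G₂.H
  σ : Fin n ≃ Fin n₁ ⊕ Fin n₂
  map_h₁ : eH h₁ = Sum.inl (G₁.leg (Fin.last n₁))
  map_h₂ : eH h₂ = Sum.inr (G₂.leg (Fin.last n₂))
  ι_compat : ∀ h : G.H, h ≠ h₁ → h ≠ h₂ → eH (G.ι h) = Sum.map G₁.ι G₂.ι (eH h)
  root_compat : ∀ h : G.H, eV (G.root h) = Sum.map G₁.root G₂.root (eH h)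
  leg_compat : ∀ i : Fin n, eH (G.leg i) =
    Sum.map (fun j : Fin n₁ => G₁.leg j.castSucc) (fun j : Fin n₂ => G₂.leg j.castSucc) (σ i)
  genus_compat : ∀ v : G.V, G.genus v = Sum.elim G₁.genus G₂.genus (eV v)

/-- The class of graphs obtained from a given graph by repeatedly cutting edges. -/
inductive CutDesc : {m : ℕ} → LegGraph m → {m' : ℕ} → LegGraph m' → Prop
  | refl {m : ℕ} (G : LegGraph m) : CutDesc G G
  | cut {m m' : ℕ} (G : LegGraph m) (G' : LegGraph m') (h₁ h₂ : G'.H)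
      (he : G'.ι h₁ = h₂) (hne : h₁ ≠ h₂) :
      CutDesc G G' → CutDesc G (G'.cut h₁ h₂ he hne)

/-- The class of graphs obtained from a given graph by adding legs and repeatedly
cutting edges. -/
inductive Desc : {m : ℕ} → LegGraph m → {m' : ℕ} → LegGraph m' → Prop
  | refl {m : ℕ} (G : LegGraph m) : Desc G G
  | cut {m m' : ℕ} (G : LegGraph m) (G' : LegGraph m') (h₁ h₂ : G'.H)
      (he : G'.ι h₁ = h₂) (hne : h₁ ≠ h₂) :
      Desc G G' → Desc G (G'.cut h₁ h₂ he hne)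
  | addLegs {m m' : ℕ} (G : LegGraph m) (G' : LegGraph m') :
      Desc G G' → Desc G G'.addLegs

lemma even_card_invol {α : Type} [Fintype α] [DecidableEq α] (f : α → α)
    (hf : ∀ a, f (f a) = a) :
    Even (Finset.univ.filter fun a => f a ≠ a).card := by
  rw [even_iff_two_dvd, ← ZMod.natCast_eq_zero_iff]
  have h : (((Finset.univ.filter fun a => f a ≠ a).card : ℕ) : ZMod 2)
      = ∑ _a ∈ Finset.univ.filter fun a => f a ≠ a, (1 : ZMod 2) := by simp
  rw [h]
  refine Finset.sum_involution (fun a _ => f a) (fun a _ => by decide) ?_ ?_ ?_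
  · intro a ha _
    exact (Finset.mem_filter.1 ha).2
  · intro a ha
    simp only [Finset.mem_filter, Finset.mem_univ, true_and] at ha ⊢
    rw [hf]
    exact fun h' => ha h'.symm
  · intro a _
    exact hf a

lemma intFin_coe (r : ℕ) (hr : 0 < r) (m : ℤ) : ((intFin r hr m : ℕ) : ℤ) = m % (r : ℤ) := by
  simp [intFin, Int.toNat_of_nonneg (Int.emod_nonneg m (show (r:ℤ) ≠ 0 by exact_mod_cast hr.ne'))]
namespace LegGraph

variable {n : ℕ}

lemma card_nonfixed (G : LegGraph n) :
    (Finset.univ.filter fun h : G.H => G.ι h ≠ h).card = 2 * G.edgeCard := by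
  have he := even_card_invol G.ι G.ι_invol
  rw [LegGraph.edgeCard, Nat.mul_div_cancel' (even_iff_two_dvd.mp he)]

lemma card_fixed (G : LegGraph n) :
    (Finset.univ.filter fun h : G.H => G.ι h = h).card = n := by
  have : (Finset.univ : Finset (Fin n)).card
      = (Finset.univ.filter fun h : G.H => G.ι h = h).card := by
    refine Finset.card_bij (fun i _ => G.leg i) ?_ ?_ ?_
    · intro i _
      simp only [Finset.mem_filter, Finset.mem_univ, true_and]
      exact (G.leg_iff _).2 ⟨i, rfl⟩
    · intro i _ j _ hij
      exact G.leg_inj hij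
    · intro h hh
      simp only [Finset.mem_filter, Finset.mem_univ, true_and] at hh
      obtain ⟨i, hi⟩ := (G.leg_iff h).1 hh
      exact ⟨i, Finset.mem_univ i, hi⟩
  simpa using this.symm

lemma card_H (G : LegGraph n) : Fintype.card G.H = 2 * G.edgeCard + n := by
  have := Finset.card_filter_add_card_filter_not
    (s := (Finset.univ : Finset G.H)) (p := fun h => G.ι h ≠ h)
  have h2 : (Finset.univ.filter fun a : G.H => ¬ G.ι a ≠ a)
      = Finset.univ.filter fun a : G.H => G.ι a = a := by
    ext a; simp [not_not]
  rw [← Finset.card_univ, ← this, G.card_nonfixed, h2, G.card_fixed]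

lemma sum_deg (G : LegGraph n) : ∑ v : G.V, G.deg v = Fintype.card G.H := by
  rw [← Finset.card_univ,
    Finset.card_eq_sum_card_fiberwise (f := G.root) (t := Finset.univ) (fun x _ => Finset.mem_univ _)]
  rfl

noncomputable instance addLegs_decPredι (G : LegGraph n) :
    DecidablePred fun h : G.addLegs.H => G.addLegs.ι h ≠ h :=
  fun h => @instDecidableNot _ (G.addLegs.decEqH _ _)

noncomputable instance addLegs_decPredRoot (G : LegGraph n) (v : G.V) :
    DecidablePred fun h : G.addLegs.H => G.addLegs.root h = v :=
  fun h => G.addLegs.decEqV _ _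

lemma addLegs_edgeCard (G : LegGraph n) : G.addLegs.edgeCard = G.edgeCard := by
  unfold LegGraph.edgeCard
  congr 1
  refine (Finset.card_bij (fun (h : G.H) _ => (Sum.inl h : G.addLegs.H)) ?_ ?_ ?_).symm
  · intro h hh
    simp only [Finset.mem_filter, Finset.mem_univ, true_and] at hh
    refine (Finset.mem_filter (p := fun h : G.addLegs.H => G.addLegs.ι h ≠ h)).2 ⟨Finset.mem_univ _, ?_⟩
    show ¬ (Sum.inl (G.ι h) : G.H ⊕ G.V) = Sum.inl h
    simpa using hh
  · intro a _ b _ hab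
    exact Sum.inl_injective hab
  · rintro (h | v) hh
    · replace hh := (Finset.mem_filter (p := fun h : G.addLegs.H => G.addLegs.ι h ≠ h)).1 hh |>.2
      refine ⟨h, ?_, rfl⟩
      simp only [Finset.mem_filter, Finset.mem_univ, true_and]
      intro h'
      exact hh (show (Sum.inl (G.ι h) : G.H ⊕ G.V) = Sum.inl h by rw [h'])
    · replace hh := (Finset.mem_filter (p := fun h : G.addLegs.H => G.addLegs.ι h ≠ h)).1 hh |>.2
      exact absurd rfl hh

lemma addLegs_h1 (G : LegGraph n) : G.addLegs.h1 = G.h1 := by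
  unfold LegGraph.h1
  rw [G.addLegs_edgeCard]
  have hv : Fintype.card G.addLegs.V = Fintype.card G.V := Fintype.card_congr (Equiv.refl G.V)
  rw [hv]

lemma mem_weightings {G : LegGraph n} {k : ℤ} {A : Fin n → ℤ} {r : ℕ} {w : G.H → Fin r} :
    w ∈ G.weightings k A r ↔ G.IsWeighting k A r w := by
  classical
  rw [LegGraph.weightings]
  simp

end LegGraph
namespace LegGraph

variable {n : ℕ}

lemma addLegs_ι (G : LegGraph n) (x : G.addLegs.H) :
    G.addLegs.ι x = Sum.map G.ι id x := rfl

lemma addLegs_root (G : LegGraph n) (x : G.addLegs.H) :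
    G.addLegs.root x = Sum.elim G.root id x := rfl

lemma addLegs_genus (G : LegGraph n) (v : G.V) : G.addLegs.genus v = G.genus v := rfl

lemma addLegs_leg_lt (G : LegGraph n) (i : Fin (n + Fintype.card G.V)) (hi : (i : ℕ) < n) :
    G.addLegs.leg i = Sum.inl (G.leg ⟨(i : ℕ), hi⟩) := dif_pos hi

lemma addLegs_leg_ge (G : LegGraph n) (i : Fin (n + Fintype.card G.V)) (hi : ¬ (i : ℕ) < n) :
    G.addLegs.leg i
      = Sum.inr ((Fintype.equivFin G.V).symm ⟨(i : ℕ) - n, by have := i.isLt; omega⟩) :=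
  dif_neg hi

lemma sum_split (G : LegGraph n) (f : G.addLegs.H → ℤ) (v : G.V) :
    ∑ h ∈ Finset.univ.filter (fun h : G.addLegs.H => G.addLegs.root h = v), f h
      = (∑ h ∈ Finset.univ.filter (fun h : G.H => G.root h = v), f (Sum.inl h))
        + f (Sum.inr v) := by
  classical
  rw [Finset.sum_filter, Finset.sum_filter]
  refine (Fintype.sum_sum_type (α₁ := G.H) (α₂ := G.V)
    (fun h => @ite _ (G.addLegs.root h = v) (G.addLegs.decEqV _ _) (f h) 0)).trans ?_
  congr 1
  show ∑ u : G.V, (if u = v then f (Sum.inr u) else 0) = f (Sum.inr v)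
  simp

lemma sum_split' (G : LegGraph n) {r : ℕ} (w : G.addLegs.H → Fin r) (v : G.V) :
    ∑ h ∈ Finset.univ.filter (fun h : G.addLegs.H => G.addLegs.root h = v), ((w h : ℕ) : ℤ)
      = (∑ h ∈ Finset.univ.filter (fun h : G.H => G.root h = v), ((w (Sum.inl h) : ℕ) : ℤ))
        + ((w (Sum.inr v) : ℕ) : ℤ) :=
  G.sum_split (fun h => ((w h : ℕ) : ℤ)) v

end LegGraph

/-- Let `Γ'` be `Γ` with one new leg attached at every vertex and let
`A'` be `A` followed by the values `-k(2g(v)-2+n(v))`.  Then (a) `∑ A' = 0`;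
(b) `h¹(Γ') = h¹(Γ)`; (c) extending a weighting by the value `(-k(2g(v)-2+n(v))) mod r`
at the new leg at each vertex `v` gives a bijection `W^Γ_{A,r} ≅ W^{Γ'}_{A',r}` (twist `k`
on `Γ`, twist `0` on `Γ'`), and consequently `S^Γ_{A,r}(Q) = S^{Γ'}_{A',r}(Q)`. -/
theorem add_legs_reduction {n : ℕ} (G : LegGraph n) (hG : G.Connected) (g : ℕ)
    (hg : G.genusTot = (g : ℤ)) (k : ℤ) (A : Fin n → ℤ)
    (hA : ∑ i, A i = k * (2 * (g : ℤ) - 2 + (n : ℤ)))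
    (A' : Fin (n + Fintype.card G.V) → ℤ)
    (hA' : ∀ i : Fin n, A' (Fin.castAdd (Fintype.card G.V) i) = A i)
    (hA'' : ∀ j : Fin (Fintype.card G.V),
      A' (Fin.natAdd n j) =
        -(k * (2 * (G.genus ((Fintype.equivFin G.V).symm j) : ℤ) - 2 +
          (G.deg ((Fintype.equivFin G.V).symm j) : ℤ)))) :
    (∑ i, A' i = 0) ∧
    G.addLegs.h1 = G.h1 ∧
    (∀ (r : ℕ) (hr : 0 < r),
      Set.BijOn
        (fun w : G.H → Fin r =>
          (Sum.elim w (fun v : G.V =>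
            intFin r hr (-(k * (2 * (G.genus v : ℤ) - 2 + (G.deg v : ℤ))))) :
            G.addLegs.H → Fin r))
        (↑(G.weightings k A r))
        (↑(show Finset (G.H ⊕ G.V → Fin r) from G.addLegs.weightings 0 A' r))) ∧
    (∀ (emb : G.NonLeg → G.addLegs.NonLeg), (∀ h : G.NonLeg, (emb h).1 = Sum.inl h.1) →
      ∀ (Q : MvPolynomial G.NonLeg ℤ) (r : ℕ), 0 < r →
        G.S k A Q r = G.addLegs.S 0 A' (MvPolynomial.rename emb Q) r) := by
  classical
  set X : G.V → ℤ := fun v => 2 * (G.genus v : ℤ) - 2 + (G.deg v : ℤ) with hXdef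
  -- the key counting identity
  have hXsum : ∑ v : G.V, X v = 2 * (g : ℤ) - 2 + (n : ℤ) := by
    have h1 : ∑ v : G.V, X v
        = 2 * (∑ v : G.V, (G.genus v : ℤ)) - 2 * (Fintype.card G.V : ℤ)
          + (∑ v : G.V, (G.deg v : ℤ)) := by
      rw [hXdef, Finset.sum_add_distrib, Finset.sum_sub_distrib, ← Finset.mul_sum,
        Finset.sum_const, Finset.card_univ, nsmul_eq_mul, mul_comm ((Fintype.card G.V : ℤ)) 2]
    have h2 : (∑ v : G.V, (G.deg v : ℤ)) = 2 * (G.edgeCard : ℤ) + (n : ℤ) := by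
      have hn : ∑ v : G.V, G.deg v = 2 * G.edgeCard + n := G.sum_deg.trans G.card_H
      exact_mod_cast hn
    rw [LegGraph.genusTot, LegGraph.h1] at hg
    rw [h1, h2]
    linarith
  -- part (a)
  have parta : ∑ i, A' i = 0 := by
    rw [Fin.sum_univ_add]
    have e1 : ∑ i : Fin n, A' (Fin.castAdd (Fintype.card G.V) i) = ∑ i, A i :=
      Finset.sum_congr rfl (fun i _ => hA' i)
    have e2 : ∑ j : Fin (Fintype.card G.V), A' (Fin.natAdd n j)
        = ∑ v : G.V, -(k * X v) := by
      rw [Finset.sum_congr rfl (fun j _ => hA'' j)]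
      exact Equiv.sum_comp (Fintype.equivFin G.V).symm (fun v => -(k * X v))
    rw [e1, e2, hA, Finset.sum_neg_distrib, ← Finset.mul_sum, hXsum]
    ring
  -- part (c)
  have partc : ∀ (r : ℕ) (hr : 0 < r),
      Set.BijOn
        (fun w : G.H → Fin r =>
          (Sum.elim w (fun v : G.V =>
            intFin r hr (-(k * (2 * (G.genus v : ℤ) - 2 + (G.deg v : ℤ))))) :
            G.addLegs.H → Fin r))
        (↑(G.weightings k A r))
        (↑(show Finset (G.H ⊕ G.V → Fin r) from G.addLegs.weightings 0 A' r)) := by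
    intro r hr
    set c : G.V → Fin r := fun v => intFin r hr (-(k * X v)) with hcdef
    have hcval : ∀ v, ((c v : ℕ) : ℤ) = (-(k * X v)) % (r : ℤ) := fun v => intFin_coe r hr _
    have hfin : ∀ x : Fin r, ((x : ℕ) : ℤ) % (r : ℤ) = ((x : ℕ) : ℤ) := fun x =>
      Int.emod_eq_of_lt (Int.natCast_nonneg _) (by exact_mod_cast x.isLt)
    -- forward direction
    have hmaps : ∀ w : G.H → Fin r, G.IsWeighting k A r w →
        G.addLegs.IsWeighting 0 A' r (Sum.elim w c) := by
      intro w hw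
      obtain ⟨hleg, hedge, hvert⟩ := hw
      refine ⟨?_, ?_, ?_⟩
      · intro i
        by_cases hi : (i : ℕ) < n
        · rw [G.addLegs_leg_lt i hi]
          have hAi : A' i = A ⟨(i : ℕ), hi⟩ := by
            rw [← hA' ⟨(i : ℕ), hi⟩]
            exact congrArg A' (Fin.ext rfl)
          rw [hAi]
          exact hleg ⟨(i : ℕ), hi⟩
        · rw [G.addLegs_leg_ge i hi]
          set j : Fin (Fintype.card G.V) := ⟨(i : ℕ) - n, by have := i.isLt; omega⟩ with hj
          have hAi : A' i = -(k * X ((Fintype.equivFin G.V).symm j)) := by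
            rw [← hA'' j]
            congr 1
            exact Fin.ext (show (i : ℕ) = n + ((i : ℕ) - n) by omega)
          rw [hAi]
          show ((c ((Fintype.equivFin G.V).symm j) : ℕ) : ℤ) % (r : ℤ) = _
          rw [hcval, Int.emod_emod_of_dvd _ dvd_rfl]
      · rintro (h | v) hne
        · have hι : G.addLegs.ι (Sum.inl h) = Sum.inl (G.ι h) := rfl
          rw [hι] at hne ⊢
          exact hedge h (fun hh => hne (by rw [hh]))
        · exact absurd rfl hne
      · intro (v : G.V)
        rw [G.sum_split' (Sum.elim w c) v]
        simp only [Sum.elim_inl, Sum.elim_inr]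
        have h1 : (∑ h ∈ Finset.univ.filter (fun h : G.H => G.root h = v),
            ((w h : ℕ) : ℤ)) % (r : ℤ) = (k * X v) % (r : ℤ) := hvert v
        have h2 : ((c v : ℕ) : ℤ) % (r : ℤ) = (-(k * X v)) % (r : ℤ) := by
          rw [hcval, Int.emod_emod_of_dvd _ dvd_rfl]
        have h3 := Int.ModEq.add h1 h2
        have h4 : ((∑ h ∈ Finset.univ.filter (fun h : G.H => G.root h = v),
            ((w h : ℕ) : ℤ)) + ((c v : ℕ) : ℤ)) % (r : ℤ) = (0 : ℤ) % (r : ℤ) := by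
          have h5 : Int.ModEq (r : ℤ) ((∑ h ∈ Finset.univ.filter (fun h : G.H => G.root h = v),
              ((w h : ℕ) : ℤ)) + ((c v : ℕ) : ℤ)) 0 := by simpa using h3
          exact h5
        rw [zero_mul]
        exact h4
    -- values at the new legs are determined
    have hval : ∀ w' : G.addLegs.H → Fin r, G.addLegs.IsWeighting 0 A' r w' →
        ∀ v : G.V, w' (Sum.inr v) = c v := by
      intro w' hw' v
      obtain ⟨hleg, _, _⟩ := hw'
      set j : Fin (Fintype.card G.V) := Fintype.equivFin G.V v with hjdef
      set i : Fin (n + Fintype.card G.V) := Fin.natAdd n j with hidef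
      have hi : ¬ (i : ℕ) < n := by
        show ¬ n + (j : ℕ) < n
        omega
      have hli : G.addLegs.leg i = Sum.inr v := by
        rw [G.addLegs_leg_ge i hi]
        congr 1
        rw [show (⟨(i : ℕ) - n, by have := i.isLt; omega⟩ : Fin (Fintype.card G.V)) = j from
          Fin.ext (show (n + (j : ℕ)) - n = (j : ℕ) by omega)]
        rw [hjdef, Equiv.symm_apply_apply]
      have h1 := hleg i
      rw [hli, hfin] at h1
      have h2 : A' i = -(k * X v) := by
        rw [hidef, hA'' j, hjdef, Equiv.symm_apply_apply]
      rw [h2] at h1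
      have h3 : ((w' (Sum.inr v) : ℕ) : ℤ) = ((c v : ℕ) : ℤ) := by rw [h1, hcval]
      exact Fin.ext (by exact_mod_cast h3)
    -- backward direction
    have hback : ∀ w' : G.addLegs.H → Fin r, G.addLegs.IsWeighting 0 A' r w' →
        G.IsWeighting k A r (fun h => w' (Sum.inl h)) := by
      intro w' hw'
      obtain ⟨hleg, hedge, hvert⟩ := hw'
      refine ⟨?_, ?_, ?_⟩
      · intro i
        have h1 := hleg (Fin.castAdd (Fintype.card G.V) i)
        have hi : ((Fin.castAdd (Fintype.card G.V) i : Fin (n + Fintype.card G.V)) : ℕ) < n :=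
          i.isLt
        rw [G.addLegs_leg_lt _ hi, hA'] at h1
        rw [show (⟨((Fin.castAdd (Fintype.card G.V) i :
            Fin (n + Fintype.card G.V)) : ℕ), hi⟩ : Fin n) = i from Fin.ext rfl] at h1
        exact h1
      · intro h hh
        have h1 := hedge (Sum.inl h) (fun hc => hh (Sum.inl_injective hc))
        exact h1
      · intro v
        have h1 := hvert v
        rw [G.sum_split' w' v] at h1
        simp only [zero_mul, Int.zero_emod] at h1
        rw [hval w' ⟨hleg, hedge, hvert⟩ v, hcval] at h1
        have h2 : ((-(k * X v)) % (r : ℤ)) % (r : ℤ) = (-(k * X v)) % (r : ℤ) :=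
          Int.emod_emod_of_dvd _ dvd_rfl
        have h3 : Int.ModEq (r : ℤ)
            ((∑ h ∈ Finset.univ.filter (fun h : G.H => G.root h = v),
              ((w' (Sum.inl h) : ℕ) : ℤ)) + (-(k * X v)) % (r : ℤ)) 0 := by
          show _ % (r : ℤ) = _ % (r : ℤ)
          rw [h1, Int.zero_emod]
        have h4 : Int.ModEq (r : ℤ) ((-(k * X v)) % (r : ℤ)) (-(k * X v)) := by
          show _ % (r : ℤ) = _ % (r : ℤ)
          exact h2
        have h5 := h3.sub h4
        have h6 : Int.ModEq (r : ℤ)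
            (∑ h ∈ Finset.univ.filter (fun h : G.H => G.root h = v),
              ((w' (Sum.inl h) : ℕ) : ℤ)) (k * X v) := by simpa using h5
        exact h6
    refine ⟨?_, ?_, ?_⟩
    · intro w hw
      rw [Finset.mem_coe, LegGraph.mem_weightings] at hw
      rw [Finset.mem_coe]
      change (_ : G.addLegs.H → Fin r) ∈ G.addLegs.weightings 0 A' r
      exact LegGraph.mem_weightings.2 (hmaps w hw)
    · intro w1 _ w2 _ heq
      funext h
      exact congrFun heq (Sum.inl h)
    · intro w' hw'
      rw [Finset.mem_coe] at hw'
      change (_ : G.addLegs.H → Fin r) ∈ G.addLegs.weightings 0 A' r at hw'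
      replace hw' := LegGraph.mem_weightings.1 hw'
      refine ⟨fun h => w' (Sum.inl h), ?_, ?_⟩
      · exact Finset.mem_coe.2 (LegGraph.mem_weightings.2 (hback w' hw'))
      · funext x
        cases x with
        | inl h => rfl
        | inr v => exact (hval w' hw' v).symm
  refine ⟨parta, G.addLegs_h1, partc, ?_⟩
  -- part (d)
  intro emb hemb Q r hr
  rw [LegGraph.S, LegGraph.S, G.addLegs_h1]
  congr 1
  obtain ⟨hm, hinj, hsurj⟩ := partc r hr
  refine Finset.sum_bij (fun w _ => (Sum.elim w (fun v : G.V =>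
      intFin r hr (-(k * (2 * (G.genus v : ℤ) - 2 + (G.deg v : ℤ))))) :
      G.addLegs.H → Fin r)) ?_ ?_ ?_ ?_
  · intro w hw
    exact Finset.mem_coe.1 (hm (Finset.mem_coe.2 hw))
  · intro a ha b hb h
    exact hinj (Finset.mem_coe.2 ha) (Finset.mem_coe.2 hb) h
  · intro b hb
    obtain ⟨a, ha, heq⟩ := hsurj (Finset.mem_coe.2 hb)
    exact ⟨a, Finset.mem_coe.1 ha, heq⟩
  · intro w _
    have hfun : ((fun h' : G.addLegs.NonLeg =>
        (((Sum.elim w (fun v : G.V =>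
          intFin r hr (-(k * (2 * (G.genus v : ℤ) - 2 + (G.deg v : ℤ))))) :
          G.addLegs.H → Fin r) h'.1 : ℕ) : ℤ)) ∘ emb)
        = fun h : G.NonLeg => ((w h.1 : ℕ) : ℤ) := by
      funext x
      simp only [Function.comp_apply]
      rw [hemb x]
      rfl
    have hev : MvPolynomial.eval (fun h' : G.addLegs.NonLeg =>
        (((Sum.elim w (fun v : G.V =>
          intFin r hr (-(k * (2 * (G.genus v : ℤ) - 2 + (G.deg v : ℤ))))) :
          G.addLegs.H → Fin r) h'.1 : ℕ) : ℤ)) (MvPolynomial.rename emb Q)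
        = MvPolynomial.eval (fun h : G.NonLeg => ((w h.1 : ℕ) : ℤ)) Q := by
      rw [MvPolynomial.eval_rename, hfun]
    exact congrArg (fun z : ℤ => (z : ℚ)) hev.symm
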